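/- The functor ev₁ : Ar(C) → C exhibits C as the localization of the arrow category Ar(C) at the class W of morphisms (f, g) : (a → b) → (a' → b') for which g is an isomorphism; equivalently, for any category D, precomposition with ev₁ induces an equivalence between Fun(C, D) and the full subcategory of Fun(Ar(C), D) spanned by functors inverting W. -/

import Mathlib

open CategoryTheory

/-- The diagonal functor `c ↦ (𝟙 c)`, a section of `ev₁`. -/
@[simps]
def arrowDiag (C : Type*) [Category C] : C ⥤ Arrow C where
  obj c := Arrow.mk (𝟙 c)
  map f := Arrow.homMk (u := f) (v := f) (by simp)

/-- The unit map `X ⟶ 𝟙_{X.right}`, whose target component is the identity. -/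
@[simps!]
def arrowUnit {C : Type*} [Category C] (X : Arrow C) :
    X ⟶ Arrow.mk (𝟙 X.right) :=
  Arrow.homMk (u := X.hom) (v := 𝟙 _) (by simp)

/-- `ev₁ : Ar(C) → C` exhibits `C` as the localization of the arrow category at the
class `W` of squares whose target-component is invertible: for any category `D`,
precomposition with `ev₁` is fully faithful, with essential image the functors
inverting `W`. -/
theorem ev1_is_localization (C : Type*) [Category C]
    (D : Type*) [Category D] :
    (∀ F G : C ⥤ D, Function.Bijective
      (fun α : F ⟶ G => Functor.whiskerLeft (Arrow.rightFunc (C := C)) α)) ∧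
    (∀ H : Arrow C ⥤ D,
      (∀ {X Y : Arrow C} (f : X ⟶ Y), IsIso f.right → IsIso (H.map f)) →
      ∃ F : C ⥤ D, Nonempty (Arrow.rightFunc ⋙ F ≅ H)) := by
  constructor
  · intro F G
    constructor
    · intro α β h
      ext c
      exact NatTrans.congr_app h (Arrow.mk (𝟙 c))
    · intro β
      refine ⟨⟨fun c => β.app (Arrow.mk (𝟙 c)), ?_⟩, ?_⟩
      · intro c d f
        exact β.naturality ((arrowDiag C).map f)
      · ext X
        have := β.naturality (arrowUnit X)
        have e1 : (Arrow.rightFunc ⋙ F).map (arrowUnit X) = 𝟙 _ := F.map_id X.right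
        have e2 : (Arrow.rightFunc ⋙ G).map (arrowUnit X) = 𝟙 _ := G.map_id X.right
        rw [e1, e2] at this
        exact (Category.id_comp _).symm.trans (this.trans (Category.comp_id _))
  · intro H hH
    refine ⟨arrowDiag C ⋙ H, ⟨?_⟩⟩
    have inst : ∀ X : Arrow C, IsIso (H.map (arrowUnit X)) := fun X =>
      hH (arrowUnit X) (by simp; infer_instance)
    refine NatIso.ofComponents (fun X => (asIso (H.map (arrowUnit X))).symm) ?_
    intro X Y f
    change H.map (Arrow.homMk (u := f.right) (v := f.right) (by simp) :
      Arrow.mk (𝟙 X.right) ⟶ Arrow.mk (𝟙 Y.right)) ≫ inv (H.map (arrowUnit Y)) = inv (H.map (arrowUnit X)) ≫ H.map f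
    rw [IsIso.comp_inv_eq, Category.assoc, IsIso.eq_inv_comp,
      ← H.map_comp, ← H.map_comp]
    congr 1
    ext
    · simp [f.w]
    · simp
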